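/- Let ℓ > 0, L > 0, let 0 < Q < S, and let w : [0,S] → ℝ be continuous with w(x) ≤ ℓ for all x ∈ [0,Q], w(x) ≥ ℓ for all x ∈ [Q,S], and ∫_Q^S (w(x)−ℓ) dx = L. Define f : [0,∞) → ℝ by f(x) = ∫₀^x w(y) dy for x ∈ [0,S] and f(x) = f(S) + ℓ·(x − S) for x > S. Then for all 0 ≤ y < x: f(x) ≤ f(y) + L + ℓ·(x − y). -/

import Mathlib

open Set MeasureTheory Filter Topology

theorem stmt_19 (ℓ L Q S : ℝ) (hℓ : 0 < ℓ) (hL : 0 < L)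
    (hQ : 0 < Q) (hQS : Q < S) (w f : ℝ → ℝ)
    (hwcont : ContinuousOn w (Set.Icc 0 S))
    (hw₁ : ∀ x ∈ Set.Icc (0:ℝ) Q, w x ≤ ℓ)
    (hw₂ : ∀ x ∈ Set.Icc Q S, ℓ ≤ w x)
    (hint : (∫ x in Q..S, (w x - ℓ)) = L)
    (hf₁ : ∀ x ∈ Set.Icc (0:ℝ) S, f x = ∫ y in (0:ℝ)..x, w y)
    (hf₂ : ∀ x : ℝ, S < x → f x = f S + ℓ * (x - S)) :
    ∀ y x : ℝ, 0 ≤ y → y < x → f x ≤ f y + L + ℓ * (x - y) := by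
  have hS0 : (0:ℝ) ≤ S := (hQ.trans hQS).le
  have hQ0 : (0:ℝ) ≤ Q := hQ.le
  have hgcont : ContinuousOn (fun t => w t - ℓ) (Set.Icc 0 S) :=
    hwcont.sub continuousOn_const
  have hI : ∀ a b : ℝ, a ∈ Set.Icc (0:ℝ) S → b ∈ Set.Icc (0:ℝ) S →
      IntervalIntegrable (fun t => w t - ℓ) volume a b := fun a b ha hb =>
    (hgcont.mono (Set.uIcc_subset_Icc ha hb)).intervalIntegrable
  have hIw : ∀ a b : ℝ, a ∈ Set.Icc (0:ℝ) S → b ∈ Set.Icc (0:ℝ) S →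
      IntervalIntegrable w volume a b := fun a b ha hb =>
    (hwcont.mono (Set.uIcc_subset_Icc ha hb)).intervalIntegrable
  have hpos : ∀ c d : ℝ, Q ≤ c → c ≤ d → d ≤ S → 0 ≤ ∫ t in c..d, (w t - ℓ) := by
    intro c d hc hcd hdS
    apply intervalIntegral.integral_nonneg hcd
    intro u hu
    have : ℓ ≤ w u := hw₂ u ⟨hc.trans hu.1, hu.2.trans hdS⟩
    linarith
  have hneg : ∀ c d : ℝ, 0 ≤ c → c ≤ d → d ≤ Q → (∫ t in c..d, (w t - ℓ)) ≤ 0 := by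
    intro c d hc hcd hdQ
    have h0 : 0 ≤ ∫ t in c..d, (ℓ - w t) := by
      apply intervalIntegral.integral_nonneg hcd
      intro u hu
      have : w u ≤ ℓ := hw₁ u ⟨hc.trans hu.1, hu.2.trans hdQ⟩
      linarith
    have heq : (∫ t in c..d, (ℓ - w t)) = - ∫ t in c..d, (w t - ℓ) := by
      rw [← intervalIntegral.integral_neg]
      congr 1; funext t; ring
    linarith
  have key : ∀ a b : ℝ, 0 ≤ a → a ≤ b → b ≤ S → (∫ t in a..b, (w t - ℓ)) ≤ L := by
    intro a b ha hab hbS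
    have haS : a ≤ S := hab.trans hbS
    have hb0 : (0:ℝ) ≤ b := ha.trans hab
    rcases le_or_gt b Q with hbQ | hQb
    · exact (hneg a b ha hab hbQ).trans hL.le
    rcases le_or_gt Q a with hQa | haQ
    · have e1 : (∫ t in a..b, (w t - ℓ)) + ∫ t in b..S, (w t - ℓ)
          = ∫ t in a..S, (w t - ℓ) :=
        intervalIntegral.integral_add_adjacent_intervals
          (hI a b ⟨ha, haS⟩ ⟨hb0, hbS⟩) (hI b S ⟨hb0, hbS⟩ ⟨hS0, le_rfl⟩)
      have e2 : (∫ t in Q..a, (w t - ℓ)) + ∫ t in a..S, (w t - ℓ)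
          = ∫ t in Q..S, (w t - ℓ) :=
        intervalIntegral.integral_add_adjacent_intervals
          (hI Q a ⟨hQ0, hQS.le⟩ ⟨ha, haS⟩) (hI a S ⟨ha, haS⟩ ⟨hS0, le_rfl⟩)
      have h1 := hpos b S hQb.le hbS le_rfl
      have h2 := hpos Q a le_rfl hQa haS
      linarith
    · have e1 : (∫ t in a..Q, (w t - ℓ)) + ∫ t in Q..b, (w t - ℓ)
          = ∫ t in a..b, (w t - ℓ) :=
        intervalIntegral.integral_add_adjacent_intervals
          (hI a Q ⟨ha, haS⟩ ⟨hQ0, hQS.le⟩) (hI Q b ⟨hQ0, hQS.le⟩ ⟨hb0, hbS⟩)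
      have e2 : (∫ t in Q..b, (w t - ℓ)) + ∫ t in b..S, (w t - ℓ)
          = ∫ t in Q..S, (w t - ℓ) :=
        intervalIntegral.integral_add_adjacent_intervals
          (hI Q b ⟨hQ0, hQS.le⟩ ⟨hb0, hbS⟩) (hI b S ⟨hb0, hbS⟩ ⟨hS0, le_rfl⟩)
      have h1 := hneg a Q ha haQ.le le_rfl
      have h2 := hpos b S hQb.le hbS le_rfl
      linarith
  have main2 : ∀ y x : ℝ, 0 ≤ y → y ≤ x → x ≤ S → f x ≤ f y + L + ℓ * (x - y) := by
    intro y x hy hyx hxS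
    have hyS : y ≤ S := hyx.trans hxS
    have hx0 : (0:ℝ) ≤ x := hy.trans hyx
    rw [hf₁ x ⟨hx0, hxS⟩, hf₁ y ⟨hy, hyS⟩]
    have hsplit : (∫ t in (0:ℝ)..y, w t) + ∫ t in y..x, w t = ∫ t in (0:ℝ)..x, w t :=
      intervalIntegral.integral_add_adjacent_intervals
        (hIw 0 y ⟨le_rfl, hS0⟩ ⟨hy, hyS⟩) (hIw y x ⟨hy, hyS⟩ ⟨hx0, hxS⟩)
    have hkey := key y x hy hyx hxS
    have hsub : (∫ t in y..x, (w t - ℓ)) = (∫ t in y..x, w t) - ℓ * (x - y) := by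
      rw [intervalIntegral.integral_sub (hIw y x ⟨hy, hyS⟩ ⟨hx0, hxS⟩)
        (intervalIntegrable_const)]
      rw [intervalIntegral.integral_const]
      ring_nf
    linarith
  intro y x hy hyx
  rcases le_or_gt x S with hxS | hSx
  · exact main2 y x hy hyx.le hxS
  rcases le_or_gt y S with hyS | hSy
  · have hfx := hf₂ x hSx
    have hfS := main2 y S hy hyS le_rfl
    have : ℓ * (x - S) + ℓ * (S - y) = ℓ * (x - y) := by ring
    linarith
  · have hfx := hf₂ x hSx
    have hfy := hf₂ y hSy
    have : ℓ * (x - S) = ℓ * (y - S) + ℓ * (x - y) := by ring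
    linarith
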